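/- Let w_⋆ be the product of all upper-triangular transvections T_{(jk)} (1 ≤ j < k ≤ q) multiplied on the left in the lexicographic order ≺ on pairs (j,k) (so the factor with the ≺-smallest index appears rightmost). Then every upper unitriangular matrix A over F_2 equals the subword of w_⋆ obtained by keeping exactly those factors T_{(jk)} with A_{jk} = 1. -/

import Mathlib

/-- The list of all pairs `(j, k)` with `j < k` in `Fin q`, listed in *decreasing*
lexicographic order (so that the `≺`-smallest pair appears last, i.e. the corresponding
factor appears rightmost in a product). -/
def lexPairsList (q : ℕ) : List (Fin q × Fin q) :=
  (List.finRange q).reverse.flatMap fun j =>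
    (((List.finRange q).filter fun k => decide (j < k)).reverse.map fun k => (j, k))

lemma mem_lexPairsList {q : ℕ} (p : Fin q × Fin q) : p ∈ lexPairsList q ↔ p.1 < p.2 := by
  obtain ⟨j, k⟩ := p
  simp [lexPairsList, eq_comm]

lemma nodup_lexPairsList (q : ℕ) : (lexPairsList q).Nodup := by
  rw [lexPairsList, List.nodup_flatMap]
  constructor
  · intro j _
    refine List.Nodup.map (fun a b h => by simpa using h) ?_
    exact (List.nodup_reverse.2 ((List.nodup_finRange q).filter _))
  · refine List.Pairwise.imp ?_ (List.pairwise_reverse.2 ((List.nodup_finRange q).imp fun h => h.symm))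
    intro a b hab x hx hx'
    simp only [List.mem_map] at hx hx'
    obtain ⟨k, _, rfl⟩ := hx
    obtain ⟨k', _, h⟩ := hx'
    exact hab (congrArg Prod.fst h.symm)

lemma pairwise_lexPairsList (q : ℕ) :
    (lexPairsList q).Pairwise (fun p p' => p'.1 ≤ p.1) := by
  rw [lexPairsList, List.pairwise_flatMap]
  constructor
  · intro j _
    refine List.Pairwise.map (R := fun _ _ : Fin q => True) _ (fun a b _ => le_refl _) ?_
    exact List.pairwise_iff_forall_sublist.2 fun _ => trivial
  · have hgt : List.Pairwise (fun a b : Fin q => b < a) (List.finRange q).reverse :=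
      List.pairwise_reverse.2 (List.pairwise_lt_finRange q)
    refine hgt.imp ?_
    intro a b hab x hx y hy
    simp only [List.mem_map] at hx hy
    obtain ⟨k, _, rfl⟩ := hx
    obtain ⟨k', _, rfl⟩ := hy
    exact le_of_lt hab

lemma prod_transvection_eq {q : ℕ} (l : List (Fin q × Fin q))
    (hup : ∀ p ∈ l, p.1 < p.2)
    (hpw : l.Pairwise (fun p p' => p'.1 ≤ p.1)) :
    (l.map fun p => Matrix.transvection p.1 p.2 (1 : ZMod 2)).prod =
      1 + (l.map fun p => Matrix.single p.1 p.2 (1 : ZMod 2)).sum := by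
  induction l with
  | nil => simp
  | cons p l ih =>
    rw [List.pairwise_cons] at hpw
    rw [List.map_cons, List.prod_cons,
      ih (fun p' h => hup p' (List.mem_cons_of_mem _ h)) hpw.2]
    have hz : Matrix.single p.1 p.2 (1:ZMod 2) *
        (l.map fun p' => Matrix.single p'.1 p'.2 (1 : ZMod 2)).sum = 0 := by
      rw [← List.sum_map_mul_left]
      apply List.sum_eq_zero
      intro x hx
      simp only [List.mem_map] at hx
      obtain ⟨p', hp', rfl⟩ := hx
      exact Matrix.single_mul_single_of_ne
        (h := ne_of_gt (lt_of_le_of_lt (hpw.1 p' hp') (hup p List.mem_cons_self))) ..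
    show (1 + Matrix.single p.1 p.2 (1:ZMod 2)) * _ = _
    rw [add_mul, one_mul, mul_add, mul_one, hz, add_zero, List.map_cons, List.sum_cons]
    abel

/-- Let `w⋆` be the product of all upper-triangular transvections `T_{(jk)}` (`j < k`)
multiplied on the left in lexicographic order `≺` on pairs `(j,k)` (so the factor with
the `≺`-smallest index appears rightmost). Then every upper unitriangular matrix `A`
over `F₂` equals the subword of `w⋆` obtained by keeping exactly those factors
`T_{(jk)}` with `A j k = 1`. -/
theorem unitriangular_eq_subword_of_lex_transvection_word (q : ℕ)
    (A : Matrix (Fin q) (Fin q) (ZMod 2))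
    (hdiag : ∀ i, A i i = 1) (hlow : ∀ i j : Fin q, j < i → A i j = 0) :
    A = (((lexPairsList q).filter fun p => decide (A p.1 p.2 = 1)).map
          fun p => Matrix.transvection p.1 p.2 (1 : ZMod 2)).prod := by
  set l := (lexPairsList q).filter fun p => decide (A p.1 p.2 = 1) with hl
  have hnd : l.Nodup := (nodup_lexPairsList q).filter _
  rw [prod_transvection_eq l
    (fun p hp => (mem_lexPairsList p).1 (List.mem_of_mem_filter hp))
    ((pairwise_lexPairsList q).filter _)]
  rw [← List.sum_toFinset _ hnd]
  ext i k
  rw [Matrix.add_apply, Matrix.sum_apply]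
  have : ∀ p : Fin q × Fin q, Matrix.single p.1 p.2 (1:ZMod 2) i k
      = if p = (i, k) then (1:ZMod 2) else 0 := by
    rintro ⟨a, b⟩
    simp [Matrix.single, Prod.ext_iff, and_comm]
  simp_rw [this]
  rw [Finset.sum_ite_eq' l.toFinset (i,k) (fun _ => (1:ZMod 2))]
  have hmem : (i,k) ∈ l.toFinset ↔ (i < k ∧ A i k = 1) := by
    rw [List.mem_toFinset, hl, List.mem_filter]
    simp [mem_lexPairsList]
  rcases lt_trichotomy i k with h | h | h
  · have h2 : A i k = 0 ∨ A i k = 1 := by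
      have hall : ∀ x : ZMod 2, x = 0 ∨ x = 1 := by decide
      exact hall _
    rcases h2 with h0 | h1
    · simp [hmem, h0, Matrix.one_apply_ne (ne_of_lt h), ne_of_lt h]
    · simp [hmem, h1, h, Matrix.one_apply_ne (ne_of_lt h)]
  · subst h
    simp [hmem, hdiag i, Matrix.one_apply_eq]
  · simp [hmem, hlow i k h, Matrix.one_apply_ne (ne_of_gt h), not_lt_of_gt h]
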